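/- Let e be an N×T matrix and let Σ and η be N×N matrices such that e e' = T·Σ + √T·η. Then ‖e‖⁴ ≤ T²·√N·‖Σ‖² + 2·T^{3/2}·‖Σ‖·‖η‖_HS + T·‖η²‖_HS. -/

import Mathlib

open Matrix MeasureTheory
open scoped BigOperators

/-- Squared Frobenius (Hilbert–Schmidt) norm of a real matrix. -/
noncomputable def frobSq {n m : ℕ} (A : Matrix (Fin n) (Fin m) ℝ) : ℝ :=
  Matrix.trace (A * Aᵀ)

/-- Operator (spectral) norm of a real matrix. -/
noncomputable def opNorm {n m : ℕ} (A : Matrix (Fin n) (Fin m) ℝ) : ℝ :=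
  ‖LinearMap.toContinuousLinearMap (Matrix.toEuclideanLin A)‖

/-- Orthogonal projection matrix onto the column space of `A`. -/
noncomputable def projMat {n m : ℕ} (A : Matrix (Fin n) (Fin m) ℝ) : Matrix (Fin n) (Fin n) ℝ :=
  Matrix.toEuclideanLin.symm
    (((LinearMap.range (Matrix.toEuclideanLin A)).subtypeL.comp
      (Submodule.orthogonalProjection (LinearMap.range (Matrix.toEuclideanLin A))) :
        EuclideanSpace ℝ (Fin n) →L[ℝ] EuclideanSpace ℝ (Fin n)) :
        EuclideanSpace ℝ (Fin n) →ₗ[ℝ] EuclideanSpace ℝ (Fin n))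

/-- Annihilator `M_A = I - P_A`. -/
noncomputable def annMat {n m : ℕ} (A : Matrix (Fin n) (Fin m) ℝ) : Matrix (Fin n) (Fin n) ℝ :=
  1 - projMat A

/-- `mu S r` is the `r`-th largest eigenvalue (1-based, with multiplicity) of the
symmetric matrix `S`; it is `0` if `S` is not symmetric or `r ∉ {1,…,n}`. -/
noncomputable def mu {n : ℕ} (S : Matrix (Fin n) (Fin n) ℝ) (r : ℕ) : ℝ :=
  if h : S.IsHermitian ∧ 1 ≤ r ∧ r ≤ n then
    (h.1.eigenvalues ∘ Tuple.sort h.1.eigenvalues)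
      (Fin.rev ⟨r - 1, by obtain ⟨-, h1, h2⟩ := h; omega⟩)
  else 0

section Frob
attribute [local instance] Matrix.frobeniusNormedAddCommGroup

lemma frobSq_eq_sum {n m : ℕ} (A : Matrix (Fin n) (Fin m) ℝ) :
    frobSq A = ∑ i, ∑ j, A i j ^ 2 := by
  simp [frobSq, Matrix.trace, Matrix.diag, Matrix.mul_apply, sq]

lemma frobSq_nonneg {n m : ℕ} (A : Matrix (Fin n) (Fin m) ℝ) : 0 ≤ frobSq A := by
  rw [frobSq_eq_sum]; positivity

lemma sqrt_frobSq_eq_norm {n m : ℕ} (A : Matrix (Fin n) (Fin m) ℝ) :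
    Real.sqrt (frobSq A) = ‖A‖ := by
  rw [Matrix.frobenius_norm_def, frobSq_eq_sum, Real.sqrt_eq_rpow]
  congr 1
  simp [Real.norm_eq_abs, sq_abs]

lemma sqrtF_add {n m : ℕ} (A B : Matrix (Fin n) (Fin m) ℝ) :
    Real.sqrt (frobSq (A + B)) ≤ Real.sqrt (frobSq A) + Real.sqrt (frobSq B) := by
  simp only [sqrt_frobSq_eq_norm]; exact norm_add_le A B

lemma sqrtF_smul {n m : ℕ} (c : ℝ) (A : Matrix (Fin n) (Fin m) ℝ) :
    Real.sqrt (frobSq (c • A)) = |c| * Real.sqrt (frobSq A) := by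
  have h : frobSq (c • A) = c ^ 2 * frobSq A := by
    simp [frobSq_eq_sum, mul_pow, Finset.mul_sum]
  rw [h, Real.sqrt_mul (sq_nonneg c), Real.sqrt_sq_eq_abs]

lemma sqrtF_transpose {n m : ℕ} (A : Matrix (Fin n) (Fin m) ℝ) :
    Real.sqrt (frobSq Aᵀ) = Real.sqrt (frobSq A) := by
  simp only [sqrt_frobSq_eq_norm]
  exact Matrix.frobenius_norm_transpose A

end Frob

section Op
open scoped Matrix.Norms.L2Operator

lemma opNorm_eq_norm {n m : ℕ} (A : Matrix (Fin n) (Fin m) ℝ) : opNorm A = ‖A‖ := rfl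

lemma opNorm_nonneg {n m : ℕ} (A : Matrix (Fin n) (Fin m) ℝ) : 0 ≤ opNorm A :=
  norm_nonneg _

lemma opNorm_transpose {n m : ℕ} (A : Matrix (Fin n) (Fin m) ℝ) : opNorm Aᵀ = opNorm A := by
  rw [opNorm_eq_norm, opNorm_eq_norm, ← Matrix.conjTranspose_eq_transpose_of_trivial]
  exact Matrix.l2_opNorm_conjTranspose A

lemma opNorm_mul_transpose_self {n m : ℕ} (A : Matrix (Fin n) (Fin m) ℝ) :
    opNorm (A * Aᵀ) = opNorm A ^ 2 := by
  have h := Matrix.l2_opNorm_conjTranspose_mul_self Aᵀ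
  rw [Matrix.conjTranspose_eq_transpose_of_trivial, Matrix.transpose_transpose] at h
  rw [opNorm_eq_norm, h, ← opNorm_eq_norm, opNorm_transpose, sq]

lemma mulVec_sq_le {n m : ℕ} (A : Matrix (Fin n) (Fin m) ℝ) (x : Fin m → ℝ) :
    ∑ i, (A *ᵥ x) i ^ 2 ≤ opNorm A ^ 2 * ∑ k, x k ^ 2 := by
  have h := Matrix.l2_opNorm_mulVec A ((WithLp.equiv 2 (Fin m → ℝ)).symm x)
  have h1 : ‖((EuclideanSpace.equiv (Fin n) ℝ).symm (A *ᵥ x) : EuclideanSpace ℝ (Fin n))‖ ^ 2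
      = ∑ i, (A *ᵥ x) i ^ 2 := by
    rw [EuclideanSpace.norm_eq, Real.sq_sqrt (by positivity)]
    simp [Real.norm_eq_abs, sq_abs]
  have h2 : ‖((WithLp.equiv 2 (Fin m → ℝ)).symm x : EuclideanSpace ℝ (Fin m))‖ ^ 2
      = ∑ k, x k ^ 2 := by
    rw [EuclideanSpace.norm_eq, Real.sq_sqrt (by positivity)]
    simp [Real.norm_eq_abs, sq_abs]
  calc ∑ i, (A *ᵥ x) i ^ 2 = _ := h1.symm
    _ ≤ (‖A‖ * ‖((WithLp.equiv 2 (Fin m → ℝ)).symm x : EuclideanSpace ℝ (Fin m))‖) ^ 2 :=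
        pow_le_pow_left₀ (norm_nonneg _) h 2
    _ = opNorm A ^ 2 * ∑ k, x k ^ 2 := by
        rw [mul_pow, h2, opNorm_eq_norm]

end Op

lemma frobSq_mul_le {n m l : ℕ} (A : Matrix (Fin n) (Fin m) ℝ) (B : Matrix (Fin m) (Fin l) ℝ) :
    frobSq (A * B) ≤ opNorm A ^ 2 * frobSq B := by
  rw [frobSq_eq_sum, frobSq_eq_sum, Finset.sum_comm, Finset.sum_comm (γ := Fin m)]
  rw [Finset.mul_sum]
  apply Finset.sum_le_sum
  intro j _
  have := mulVec_sq_le A (fun k => B k j)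
  simpa [Matrix.mul_apply, Matrix.mulVec, dotProduct] using this

lemma frobSq_le_card {n : ℕ} (M : Matrix (Fin n) (Fin n) ℝ) :
    frobSq M ≤ (n : ℝ) * opNorm M ^ 2 := by
  have h := frobSq_mul_le M (1 : Matrix (Fin n) (Fin n) ℝ)
  have h1 : frobSq (1 : Matrix (Fin n) (Fin n) ℝ) = n := by
    rw [frobSq_eq_sum]
    simp [Matrix.one_apply, Finset.sum_ite_eq']
  rw [mul_one, h1] at h
  linarith [h]

lemma opNorm_le_sqrtF {n m : ℕ} (A : Matrix (Fin n) (Fin m) ℝ) :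
    opNorm A ≤ Real.sqrt (frobSq A) := by
  rw [opNorm]
  apply ContinuousLinearMap.opNorm_le_bound _ (Real.sqrt_nonneg _)
  intro y
  have key : ‖(LinearMap.toContinuousLinearMap (Matrix.toEuclideanLin A)) y‖ ^ 2
      ≤ frobSq A * ‖y‖ ^ 2 := by
    have happ : (LinearMap.toContinuousLinearMap (Matrix.toEuclideanLin A)) y
        = (WithLp.equiv 2 (Fin n → ℝ)).symm (A *ᵥ (WithLp.equiv 2 (Fin m → ℝ)) y) := by
      exact Matrix.toEuclideanLin_apply A y
    rw [happ, EuclideanSpace.norm_eq, Real.sq_sqrt (by positivity)]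
    have hy : ‖y‖ ^ 2 = ∑ k, (y k) ^ 2 := by
      rw [EuclideanSpace.norm_eq, Real.sq_sqrt (by positivity)]
      simp [Real.norm_eq_abs, sq_abs]
    rw [hy, frobSq_eq_sum, Finset.sum_mul]
    apply Finset.sum_le_sum
    intro i _
    have cs := Finset.sum_mul_sq_le_sq_mul_sq Finset.univ (fun k => A i k) (fun k => y k)
    simp only [Real.norm_eq_abs, sq_abs]
    calc ((A *ᵥ ((WithLp.equiv 2 (Fin m → ℝ)) y)) i) ^ 2
        = (∑ k, A i k * y k) ^ 2 := by simp [Matrix.mulVec, dotProduct]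
      _ ≤ (∑ k, A i k ^ 2) * ∑ k, y k ^ 2 := cs
  calc ‖(LinearMap.toContinuousLinearMap (Matrix.toEuclideanLin A)) y‖
      = Real.sqrt (‖(LinearMap.toContinuousLinearMap (Matrix.toEuclideanLin A)) y‖ ^ 2) :=
        (Real.sqrt_sq (norm_nonneg _)).symm
    _ ≤ Real.sqrt (frobSq A * ‖y‖ ^ 2) := Real.sqrt_le_sqrt key
    _ = Real.sqrt (frobSq A) * ‖y‖ := by
        rw [Real.sqrt_mul (frobSq_nonneg A), Real.sqrt_sq (norm_nonneg _)]

set_option maxHeartbeats 2000000 in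
/-- If e is N×T and Σ, η are N×N with e e' = T·Σ + √T·η, then
‖e‖⁴ ≤ T²·√N·‖Σ‖² + 2·T^{3/2}·‖Σ‖·‖η‖_HS + T·‖η²‖_HS. -/
theorem statement15 {N T : ℕ} (hN : 0 < N) (hT : 0 < T)
    (e : Matrix (Fin N) (Fin T) ℝ) (S η : Matrix (Fin N) (Fin N) ℝ)
    (hdec : e * eᵀ = (T : ℝ) • S + Real.sqrt T • η) :
    opNorm e ^ 4 ≤
      (T : ℝ) ^ 2 * Real.sqrt N * opNorm S ^ 2
        + 2 * ((T : ℝ) * Real.sqrt T) * opNorm S * Real.sqrt (frobSq η)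
        + (T : ℝ) * Real.sqrt (frobSq (η * η)) := by
  have hTnn : (0:ℝ) ≤ T := Nat.cast_nonneg T
  have hst : (0:ℝ) ≤ Real.sqrt T := Real.sqrt_nonneg _
  have hts : (0:ℝ) ≤ (T : ℝ) * Real.sqrt T := by positivity
  set M := e * eᵀ with hM
  -- step 1: opNorm e ^ 4 = opNorm (M * M)
  have hMT : Mᵀ = M := by rw [hM, Matrix.transpose_mul, Matrix.transpose_transpose]
  have h1 : opNorm e ^ 4 = opNorm (M * M) := by
    have ha : opNorm M = opNorm e ^ 2 := opNorm_mul_transpose_self e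
    have hb : opNorm (M * M) = opNorm M ^ 2 := by
      rw [show M * M = M * Mᵀ by rw [hMT]]
      exact opNorm_mul_transpose_self M
    rw [hb, ha]; ring
  -- step 2: expansion of M * M
  have hb2 : Real.sqrt T * Real.sqrt T = (T : ℝ) := Real.mul_self_sqrt hTnn
  have h3 : M * M = ((T : ℝ) ^ 2) • (S * S) + ((T : ℝ) * Real.sqrt T) • (S * η)
      + ((T : ℝ) * Real.sqrt T) • (η * S) + (T : ℝ) • (η * η) := by
    rw [hdec]
    rw [add_mul, mul_add, mul_add]
    simp only [smul_mul_assoc, mul_smul_comm, smul_smul]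
    rw [hb2]
    module
  -- step 3: triangle inequality on Frobenius norm
  set X1 := ((T : ℝ) ^ 2) • (S * S)
  set X2 := ((T : ℝ) * Real.sqrt T) • (S * η)
  set X3 := ((T : ℝ) * Real.sqrt T) • (η * S)
  set X4 := (T : ℝ) • (η * η)
  have hsum : Real.sqrt (frobSq (X1 + X2 + X3 + X4))
      ≤ Real.sqrt (frobSq X1) + Real.sqrt (frobSq X2) + Real.sqrt (frobSq X3)
        + Real.sqrt (frobSq X4) := by
    calc Real.sqrt (frobSq (X1 + X2 + X3 + X4))
        ≤ Real.sqrt (frobSq (X1 + X2 + X3)) + Real.sqrt (frobSq X4) := sqrtF_add _ _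
      _ ≤ (Real.sqrt (frobSq (X1 + X2)) + Real.sqrt (frobSq X3)) + Real.sqrt (frobSq X4) :=
          add_le_add (sqrtF_add _ _) le_rfl
      _ ≤ ((Real.sqrt (frobSq X1) + Real.sqrt (frobSq X2)) + Real.sqrt (frobSq X3))
            + Real.sqrt (frobSq X4) :=
          add_le_add (add_le_add (sqrtF_add _ _) le_rfl) le_rfl
  have e1 : Real.sqrt (frobSq X1) = (T : ℝ) ^ 2 * Real.sqrt (frobSq (S * S)) := by
    rw [sqrtF_smul, abs_of_nonneg (by positivity)]
  have e2 : Real.sqrt (frobSq X2) = ((T : ℝ) * Real.sqrt T) * Real.sqrt (frobSq (S * η)) := by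
    rw [sqrtF_smul, abs_of_nonneg hts]
  have e3 : Real.sqrt (frobSq X3) = ((T : ℝ) * Real.sqrt T) * Real.sqrt (frobSq (η * S)) := by
    rw [sqrtF_smul, abs_of_nonneg hts]
  have e4 : Real.sqrt (frobSq X4) = (T : ℝ) * Real.sqrt (frobSq (η * η)) := by
    rw [sqrtF_smul, abs_of_nonneg hTnn]
  -- step 4: individual bounds
  have hb1 : Real.sqrt (frobSq (S * S)) ≤ Real.sqrt N * opNorm S ^ 2 := by
    calc Real.sqrt (frobSq (S * S)) ≤ Real.sqrt (opNorm S ^ 2 * frobSq S) :=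
          Real.sqrt_le_sqrt (frobSq_mul_le S S)
      _ ≤ Real.sqrt (opNorm S ^ 2 * ((N : ℝ) * opNorm S ^ 2)) :=
          Real.sqrt_le_sqrt (mul_le_mul_of_nonneg_left (frobSq_le_card S) (sq_nonneg _))
      _ = Real.sqrt N * opNorm S ^ 2 := by
          rw [show opNorm S ^ 2 * ((N : ℝ) * opNorm S ^ 2) = (N : ℝ) * (opNorm S ^ 2) ^ 2 by ring,
            Real.sqrt_mul (Nat.cast_nonneg N), Real.sqrt_sq (sq_nonneg _)]
  have hbSη : Real.sqrt (frobSq (S * η)) ≤ opNorm S * Real.sqrt (frobSq η) := by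
    calc Real.sqrt (frobSq (S * η)) ≤ Real.sqrt (opNorm S ^ 2 * frobSq η) :=
          Real.sqrt_le_sqrt (frobSq_mul_le S η)
      _ = opNorm S * Real.sqrt (frobSq η) := by
          rw [Real.sqrt_mul (sq_nonneg _), Real.sqrt_sq (opNorm_nonneg S)]
  have hbηS : Real.sqrt (frobSq (η * S)) ≤ opNorm S * Real.sqrt (frobSq η) := by
    rw [← sqrtF_transpose (η * S), Matrix.transpose_mul]
    calc Real.sqrt (frobSq (Sᵀ * ηᵀ)) ≤ Real.sqrt (opNorm Sᵀ ^ 2 * frobSq ηᵀ) :=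
          Real.sqrt_le_sqrt (frobSq_mul_le Sᵀ ηᵀ)
      _ = opNorm S * Real.sqrt (frobSq η) := by
          rw [Real.sqrt_mul (sq_nonneg _), Real.sqrt_sq (opNorm_nonneg Sᵀ), opNorm_transpose]
          congr 2
          rw [← Real.sq_sqrt (frobSq_nonneg ηᵀ), sqrtF_transpose, Real.sq_sqrt (frobSq_nonneg η)]
  -- assemble
  have c1 := mul_le_mul_of_nonneg_left hb1 (sq_nonneg (T : ℝ))
  have c2 := mul_le_mul_of_nonneg_left hbSη hts
  have c3 := mul_le_mul_of_nonneg_left hbηS hts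
  calc opNorm e ^ 4 = opNorm (M * M) := h1
    _ ≤ Real.sqrt (frobSq (M * M)) := opNorm_le_sqrtF _
    _ = Real.sqrt (frobSq (X1 + X2 + X3 + X4)) := by rw [h3]
    _ ≤ Real.sqrt (frobSq X1) + Real.sqrt (frobSq X2) + Real.sqrt (frobSq X3)
        + Real.sqrt (frobSq X4) := hsum
    _ ≤ _ := by rw [e1, e2, e3, e4]; nlinarith [c1, c2, c3]
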